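/- Let φ : ℕ → Option ℕ and let w : ℕ → ℂ be bounded. Then T_{w,φ} : ℓ¹ → ℓ¹ is surjective if and only if both of the following hold: (a) for every j ∈ ℕ there exists i ∈ ℕ with φ(i) = some j; and (b) there exists c > 0 such that for every j ∈ ℕ there exists i ∈ ℕ with φ(i) = some j and |w(i)| > c. -/

import Mathlib

/-- Let `T` be the weighted shift-type operator on `ℓ¹` determined by `φ : ℕ → Option ℕ` and a
bounded weight `w` (i.e. `(T a)(j) = Σ_{i : φ(i) = some j} w(i)·a(i)`). Then `T` is surjective
iff (a) every `j` is of the form `φ(i) = some j`, and (b) there exists `c > 0` such that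
every `j` admits `i` with `φ(i) = some j` and `|w(i)| > c`. -/
theorem stmt12 (φ : ℕ → Option ℕ) (w : ℕ → ℂ) (hw : ∃ C : ℝ, ∀ i, ‖w i‖ ≤ C)
    (T : lp (fun _ : ℕ => ℂ) 1 →L[ℂ] lp (fun _ : ℕ => ℂ) 1)
    (hT : ∀ (a : lp (fun _ : ℕ => ℂ) 1) (j : ℕ),
      T a j = ∑' i : {i : ℕ // φ i = some j}, w i * a i) :
    Function.Surjective T ↔
      ((∀ j : ℕ, ∃ i : ℕ, φ i = some j) ∧
        ∃ c > (0 : ℝ), ∀ j : ℕ, ∃ i : ℕ, φ i = some j ∧ c < ‖w i‖) := by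
  classical
  have hsum : ∀ a : lp (fun _ : ℕ => ℂ) 1, Summable fun i => ‖a i‖ := by
    intro a
    have := (lp.memℓp a).summable (p := 1) (by norm_num)
    simpa using this
  have hnorm : ∀ a : lp (fun _ : ℕ => ℂ) 1, ‖a‖ = ∑' i, ‖a i‖ := by
    intro a
    have := lp.norm_rpow_eq_tsum (p := 1) (by norm_num) a
    simpa using this
  constructor
  · intro hsurj
    obtain ⟨C, hC0, hC⟩ := T.exists_preimage_norm_le hsurj
    -- first: every j is hit
    have hhit : ∀ j : ℕ, ∃ i, φ i = some j := by
      intro j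
      obtain ⟨a, ha, -⟩ := hC (lp.single 1 j 1)
      by_contra hcon
      push_neg at hcon
      haveI : IsEmpty {i : ℕ // φ i = some j} :=
        ⟨fun ⟨i, hi⟩ => hcon i hi⟩
      have h0 : T a j = 0 := by rw [hT]; exact tsum_empty
      rw [ha] at h0
      rw [lp.single_apply_self] at h0
      exact one_ne_zero h0
    refine ⟨hhit, 1 / (2 * C), by positivity, ?_⟩
    intro j
    by_contra hcon
    push_neg at hcon
    obtain ⟨a, ha, hna⟩ := hC (lp.single 1 j 1)
    have hb1 : ‖lp.single (E := fun _ : ℕ => ℂ) 1 j (1 : ℂ)‖ = 1 := by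
      have := lp.norm_single (E := fun _ : ℕ => ℂ) (p := 1) (by norm_num)
        j (1 : ℂ)
      simpa using this
    have hTa1 : T a j = 1 := by rw [ha, lp.single_apply_self]
    -- bound ‖T a j‖
    have hsub : Summable fun i : {i : ℕ // φ i = some j} => ‖w i * a i‖ := by
      apply Summable.of_nonneg_of_le (fun i => norm_nonneg _)
        (fun i : {i : ℕ // φ i = some j} => ?_)
        (((hsum a).subtype {i | φ i = some j}).mul_left (1 / (2 * C)))
      rw [norm_mul]
      exact mul_le_mul_of_nonneg_right (hcon i i.2) (norm_nonneg _)
    have hle : ‖T a j‖ ≤ 1 / (2 * C) * ‖a‖ := by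
      rw [hT]
      calc ‖∑' i : {i : ℕ // φ i = some j}, w i * a i‖
          ≤ ∑' i : {i : ℕ // φ i = some j}, ‖w i * a i‖ := norm_tsum_le_tsum_norm hsub
        _ ≤ ∑' i : {i : ℕ // φ i = some j}, 1 / (2 * C) * ‖a i‖ := by
            refine Summable.tsum_le_tsum (fun i => ?_) hsub
              (((hsum a).subtype {i | φ i = some j}).mul_left (1 / (2 * C)))
            rw [norm_mul]
            exact mul_le_mul_of_nonneg_right (hcon i i.2) (norm_nonneg _)
        _ = 1 / (2 * C) * ∑' i : {i : ℕ // φ i = some j}, ‖a i‖ := by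
            rw [tsum_mul_left]
        _ ≤ 1 / (2 * C) * ∑' i, ‖a i‖ := by
            refine mul_le_mul_of_nonneg_left ?_ (by positivity)
            exact Summable.tsum_subtype_le (fun i => ‖a i‖) {i | φ i = some j}
              (fun i => norm_nonneg _) (hsum a)
        _ = 1 / (2 * C) * ‖a‖ := by rw [hnorm a]
    rw [hTa1] at hle
    have hnale : ‖a‖ ≤ C := by simpa [hb1] using hna
    have : (1 : ℝ) ≤ 1 / 2 := by
      calc (1 : ℝ) = ‖(1 : ℂ)‖ := by simp
        _ ≤ 1 / (2 * C) * ‖a‖ := hle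
        _ ≤ 1 / (2 * C) * C := by
            exact mul_le_mul_of_nonneg_left hnale (by positivity)
        _ = 1 / 2 := by field_simp
    linarith
  · rintro ⟨hontoφ, c, hc0, hc⟩
    choose σ hσ hcw using hc
    have hσinj : Function.Injective σ := by
      intro j k h
      have h1 : some j = some k := by rw [← hσ j, ← hσ k, h]
      exact Option.some_injective _ h1
    have hwne : ∀ j, w (σ j) ≠ 0 := by
      intro j h
      have := hcw j
      rw [h] at this
      simp at this
      linarith
    intro b
    set g : ℕ → ℂ := fun j => b j / w (σ j) with hg
    set a : ℕ → ℂ := Function.extend σ g 0 with hadef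
    have haσ : ∀ j, a (σ j) = b j / w (σ j) := fun j => hσinj.extend_apply g 0 j
    have haz : ∀ i, i ∉ Set.range σ → a i = 0 := by
      intro i hi
      have : ¬∃ j, σ j = i := by simpa [Set.range] using hi
      simpa using Function.extend_apply' g (0 : ℕ → ℂ) i this
    have hasummable : Summable fun i => ‖a i‖ := by
      rw [← Function.Injective.summable_iff hσinj (fun i hi => by rw [haz i hi]; simp)]
      apply Summable.of_nonneg_of_le (fun j => norm_nonneg _)
        (fun j => ?_) ((hsum b).mul_left c⁻¹)
      show ‖a (σ j)‖ ≤ c⁻¹ * ‖b j‖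
      rw [haσ j, norm_div]
      rw [div_le_iff₀ (norm_pos_iff.mpr (hwne j))]
      calc c⁻¹ * ‖b j‖ * ‖w (σ j)‖ ≥ c⁻¹ * ‖b j‖ * c := by
            exact mul_le_mul_of_nonneg_left (le_of_lt (hcw j)) (by positivity)
        _ = ‖b j‖ := by field_simp
    have hmem : Memℓp a 1 := memℓp_gen (by simpa using hasummable)
    refine ⟨⟨a, hmem⟩, ?_⟩
    apply lp.ext
    funext j
    have hcoe : ∀ i, ((⟨a, hmem⟩ : lp (fun _ : ℕ => ℂ) 1) : ℕ → ℂ) i = a i := fun i => rfl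
    rw [hT]
    have hkey : ∑' i : {i : ℕ // φ i = some j},
        w i * ((⟨a, hmem⟩ : lp (fun _ : ℕ => ℂ) 1) : ℕ → ℂ) i = b j := by
      have h1 : ∑' i : {i : ℕ // φ i = some j},
          w i * a i = w (σ j) * a (σ j) := by
        apply tsum_eq_single (⟨σ j, hσ j⟩ : {i : ℕ // φ i = some j})
        rintro ⟨i, hi⟩ hne
        have hine : i ≠ σ j := by
          intro h
          apply hne
          exact Subtype.ext h
        have : i ∉ Set.range σ := by
          rintro ⟨k, rfl⟩
          have : some k = some j := by rw [← hσ k, hi]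
          exact hine (congrArg σ (Option.some_injective _ this) ▸ rfl)
        simp [haz i this]
      calc ∑' i : {i : ℕ // φ i = some j},
            w i * ((⟨a, hmem⟩ : lp (fun _ : ℕ => ℂ) 1) : ℕ → ℂ) i
          = ∑' i : {i : ℕ // φ i = some j}, w i * a i := by rfl
        _ = w (σ j) * a (σ j) := h1
        _ = b j := by
            rw [haσ j, mul_div_assoc']
            rw [mul_comm, mul_div_assoc, div_self (hwne j), mul_one]
    exact hkey
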